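/- Let d ≥ 1, c > 0, and let f : [−1/2, 1/2]^d → ℝ be continuous with f(0) = 0 and with |f(x_1, …, x_d)| ≥ c whenever x_j = 1/2 for some 1 ≤ j ≤ d. Then for every real (d−1) × d matrix W, every vector b ∈ ℝ^{d−1}, and every function F : ℝ^{d−1} → ℝ, there exists x ∈ [−1/2, 1/2]^d with | f(x) − F(W x + b) | ≥ c/2. -/

import Mathlib

/-- key step of the width lower bound: any function factoring through a
single affine layer into `ℝ^{d-1}` makes an error of at least `c/2` when approximating
a continuous function vanishing at the origin and bounded below by `c` whenever some
coordinate equals `1/2`. -/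
theorem width_lower_bound_affine (d : ℕ) (hd : 1 ≤ d) (c : ℝ) (hc : 0 < c)
    (f : (Fin d → ℝ) → ℝ)
    (hfcont : ContinuousOn f
      (Set.Icc (fun _ => -(1 / 2) : Fin d → ℝ) (fun _ => 1 / 2)))
    (hf0 : f 0 = 0)
    (hfc : ∀ x ∈ Set.Icc (fun _ => -(1 / 2) : Fin d → ℝ) (fun _ => 1 / 2),
      (∃ j, x j = 1 / 2) → c ≤ |f x|) :
    ∀ (W : Matrix (Fin (d - 1)) (Fin d) ℝ) (b : Fin (d - 1) → ℝ)
      (F : (Fin (d - 1) → ℝ) → ℝ),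
      ∃ x ∈ Set.Icc (fun _ => -(1 / 2) : Fin d → ℝ) (fun _ => 1 / 2),
        c / 2 ≤ |f x - F (W.mulVec x + b)| := by
  intro W b F
  -- nontrivial kernel of the linear part
  have hker : LinearMap.ker W.mulVecLin ≠ ⊥ := by
    apply LinearMap.ker_ne_bot_of_finrank_lt
    simp only [Module.finrank_fintype_fun_eq_card, Fintype.card_fin]
    omega
  obtain ⟨v, hv, hv0⟩ := Submodule.exists_mem_ne_zero_of_ne_bot hker
  have hWv : W.mulVec v = 0 := hv
  haveI : Nonempty (Fin d) := ⟨⟨0, by omega⟩⟩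
  obtain ⟨j, -, hj⟩ := Finset.exists_max_image Finset.univ (fun i => |v i|)
    Finset.univ_nonempty
  obtain ⟨i₀, hi₀⟩ := Function.ne_iff.mp hv0
  have hvj : 0 < |v j| := lt_of_lt_of_le (abs_pos.mpr hi₀) (hj i₀ (Finset.mem_univ i₀))
  have hvj0 : v j ≠ 0 := fun h => by simp [h] at hvj
  set x : Fin d → ℝ := (2 * v j)⁻¹ • v with hx
  have hxi : ∀ i, |x i| ≤ 1 / 2 := by
    intro i
    have : |x i| = |v i| / (2 * |v j|) := by
      rw [hx]
      simp only [Pi.smul_apply, smul_eq_mul, abs_mul, abs_inv, abs_mul]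
      rw [abs_two]
      ring
    rw [this, div_le_iff₀ (by linarith)]
    have := hj i (Finset.mem_univ i)
    linarith
  have hxmem : x ∈ Set.Icc (fun _ => -(1 / 2) : Fin d → ℝ) (fun _ => 1 / 2) := by
    constructor <;> intro i <;> have := abs_le.mp (hxi i) <;> simp <;> linarith
  have hxj : x j = 1 / 2 := by
    rw [hx]; simp only [Pi.smul_apply, smul_eq_mul]
    field_simp
  have hWx : W.mulVec x = 0 := by
    rw [hx, Matrix.mulVec_smul, hWv, smul_zero]
  have hfx : c ≤ |f x| := hfc x hxmem ⟨j, hxj⟩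
  have h0mem : (0 : Fin d → ℝ) ∈
      Set.Icc (fun _ => -(1 / 2) : Fin d → ℝ) (fun _ => 1 / 2) := by
    constructor <;> intro i <;> norm_num
  by_cases h : c / 2 ≤ |f x - F (W.mulVec x + b)|
  · exact ⟨x, hxmem, h⟩
  · refine ⟨0, h0mem, ?_⟩
    rw [Matrix.mulVec_zero, zero_add, hf0, zero_sub, abs_neg]
    rw [hWx, zero_add] at h
    push_neg at h
    have := abs_sub_abs_le_abs_sub (f x) (F b)
    have h2 := abs_sub (f x) (F b)
    calc c / 2 = c - c / 2 := by ring
      _ ≤ |f x| - |f x - F b| := by linarith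
      _ ≤ |F b| := by
          have := abs_sub_abs_le_abs_sub (f x) (F b)
          linarith [abs_abs (F b), abs_le.mp (abs_abs_sub_abs_le_abs_sub (f x) (F b))]
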